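/- Let f : ℝⁿ → ℝᵐ be continuous at x̄ ∈ ℝⁿ. If f is linearly open around x̄ (with some constant α > 0) and metrically injective around x̄, then f is strongly regular around x̄; more precisely, for every α ∈ (0, lop(f, x̄)) and every β ∈ (0, inj(f, x̄)) there exist r₀ > 0 and a mapping f♯ : B̄(f(x̄), αr₀) → ℝⁿ such that f⁻¹(y) ∩ B̄(x̄, r₀) = {f♯(y)} for every y ∈ B̄(f(x̄), αr₀), and ‖f♯(y₁) − f♯(y₂)‖ ≤ β⁻¹‖y₁ − y₂‖ for all y₁, y₂ ∈ B̄(f(x̄), αr₀). -/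
import Mathlib


open Metric Set
open scoped ENNReal NNReal

noncomputable section

variable {E F : Type*} [NormedAddCommGroup E] [NormedAddCommGroup F]

/-- `f` is `α`-covering at `x`: for every `ε > 0` there is `r ∈ (0, ε]` with
`B̄(f x, α r) ⊆ f (B̄(x, r))`. -/
def AlphaCoveringAt (f : E → F) (x : E) (α : ℝ) : Prop :=
  ∀ ε > (0:ℝ), ∃ r : ℝ, 0 < r ∧ r ≤ ε ∧
    closedBall (f x) (α * r) ⊆ f '' closedBall x r

/-- The covering bound `cov(f, x)`: supremum of all `α > 0` for which `f` is
`α`-covering at `x`. -/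
def covBound (f : E → F) (x : E) : ℝ≥0∞ :=
  ⨆ (α : ℝ≥0) (_ : 0 < α ∧ AlphaCoveringAt f x (α : ℝ)), (α : ℝ≥0∞)

/-- `f` is linearly open around `xb` with constant `α`. -/
def LinOpenWith (f : E → F) (xb : E) (α : ℝ) : Prop :=
  ∃ U ∈ nhds xb, ∃ V ∈ nhds (f xb), ∀ x ∈ U, ∀ r > (0:ℝ),
    ball (f x) (α * r) ∩ V ⊆ f '' ball x r

/-- The exact linear openness bound `lop(f, xb)` (`0` if no constant works). -/
def lopBound (f : E → F) (xb : E) : ℝ≥0∞ :=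
  ⨆ (α : ℝ≥0) (_ : 0 < α ∧ LinOpenWith f xb (α : ℝ)), (α : ℝ≥0∞)

/-- `ℓ` is a Lipschitz constant of `h` on some neighbourhood of `xb`. -/
def IsLipConstAround (h : E → F) (xb : E) (ℓ : ℝ) : Prop :=
  ∃ U ∈ nhds xb, ∀ x₁ ∈ U, ∀ x₂ ∈ U, ‖h x₁ - h x₂‖ ≤ ℓ * ‖x₁ - x₂‖

/-- `lip(h, xb)`: infimum of all `ℓ > 0` which are Lipschitz constants of `h`
on some neighbourhood of `xb` (`∞` if `h` is not locally Lipschitz at `xb`). -/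
def lipBound (h : E → F) (xb : E) : ℝ≥0∞ :=
  ⨅ (ℓ : ℝ≥0) (_ : 0 < ℓ ∧ IsLipConstAround h xb (ℓ : ℝ)), (ℓ : ℝ≥0∞)

/-- `β` is a metric injectivity constant for `g` on some closed ball around `xb`. -/
def IsInjConstAround (g : E → F) (xb : E) (β : ℝ) : Prop :=
  ∃ δ > (0:ℝ), ∀ x₁ ∈ closedBall xb δ, ∀ x₂ ∈ closedBall xb δ,
    β * ‖x₁ - x₂‖ ≤ ‖g x₁ - g x₂‖

/-- `g` is metrically injective around `xb`. -/
def MetricallyInjectiveAround (g : E → F) (xb : E) : Prop :=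
  ∃ β > (0:ℝ), IsInjConstAround g xb β

/-- The metric injection bound `inj(g, xb)`: supremum of all valid `β > 0`. -/
def injBound (g : E → F) (xb : E) : ℝ≥0∞ :=
  ⨆ (β : ℝ≥0) (_ : 0 < β ∧ IsInjConstAround g xb (β : ℝ)), (β : ℝ≥0∞)

/-- `h` is a strict `μ`-estimator of `f` at `xb`: `h xb = f xb` and
`lip(f - h, xb) ≤ μ`. -/
def IsStrictEstimator (f h : E → F) (xb : E) (μ : ℝ≥0) : Prop :=
  h xb = f xb ∧ lipBound (fun x => f x - h x) xb ≤ (μ : ℝ≥0∞)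

/-- `g` is strongly (metrically) regular around `xb`: it is linearly open around
`xb` and the set-valued inverse `g⁻¹` has a single-valued graphical localization
around `(g xb, xb)`. -/
def StronglyRegularAround (g : E → F) (xb : E) : Prop :=
  (∃ α > (0:ℝ), LinOpenWith g xb α) ∧
  ∃ V ∈ nhds (g xb), ∃ U ∈ nhds xb, ∀ y ∈ V, ∃ x : E, g ⁻¹' {y} ∩ U = {x}

/-- If `f` is continuous at `xb`, linearly open around `xb` and metrically
injective around `xb`, then `f` is strongly regular around `xb`; more
precisely, for every `α ∈ (0, lop(f, xb))` and `β ∈ (0, inj(f, xb))` there are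
`r₀ > 0` and a single-valued localization `fs` of `f⁻¹` on `B̄(f xb, α r₀)`
which is Lipschitz with constant `β⁻¹`. -/

theorem key_lemma {E F : Type*} [NormedAddCommGroup E] [NormedAddCommGroup F]
    (f : E → F) (xb : E) (α β α' : ℝ) (hβ : 0 < β)
    (hlo : LinOpenWith f xb α) (hinj : IsInjConstAround f xb β)
    (hα'0 : 0 < α') (hα' : α' < α) :
    ∃ r₀ > (0:ℝ), ∃ fs : F → E,
      (∀ y ∈ closedBall (f xb) (α' * r₀),
        f ⁻¹' {y} ∩ closedBall xb r₀ = {fs y}) ∧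
      ∀ y₁ ∈ closedBall (f xb) (α' * r₀),
        ∀ y₂ ∈ closedBall (f xb) (α' * r₀),
          ‖fs y₁ - fs y₂‖ ≤ β⁻¹ * ‖y₁ - y₂‖ := by
  obtain ⟨U, hU, V, hV, hcov⟩ := hlo
  obtain ⟨δ, hδ, hinjδ⟩ := hinj
  obtain ⟨ρ₁, hρ₁, hρ₁U⟩ := Metric.nhds_basis_closedBall.mem_iff.mp hU
  obtain ⟨ρ₂, hρ₂, hρ₂V⟩ := Metric.nhds_basis_closedBall.mem_iff.mp hV
  set r₀ : ℝ := min (min ρ₁ δ) (ρ₂ / α') with hr₀def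
  have hr₀ : 0 < r₀ := lt_min (lt_min hρ₁ hδ) (div_pos hρ₂ hα'0)
  have hr₀ρ₁ : r₀ ≤ ρ₁ := le_trans (min_le_left _ _) (min_le_left _ _)
  have hr₀δ : r₀ ≤ δ := le_trans (min_le_left _ _) (min_le_right _ _)
  have hr₀ρ₂ : α' * r₀ ≤ ρ₂ := by
    rw [mul_comm]
    exact (le_div_iff₀ hα'0).mp (min_le_right _ _)
  -- uniqueness
  have huniq : ∀ x₁ ∈ closedBall xb r₀, ∀ x₂ ∈ closedBall xb r₀,
      f x₁ = f x₂ → x₁ = x₂ := by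
    intro x₁ hx₁ x₂ hx₂ hfx
    have h1 : x₁ ∈ closedBall xb δ := closedBall_subset_closedBall hr₀δ hx₁
    have h2 : x₂ ∈ closedBall xb δ := closedBall_subset_closedBall hr₀δ hx₂
    have := hinjδ x₁ h1 x₂ h2
    rw [hfx, sub_self, norm_zero] at this
    have hn : ‖x₁ - x₂‖ ≤ 0 := by nlinarith
    have : ‖x₁ - x₂‖ = 0 := le_antisymm hn (norm_nonneg _)
    rwa [norm_sub_eq_zero_iff] at this
  -- existence
  have hex : ∀ y ∈ closedBall (f xb) (α' * r₀),
      ∃ x, f x = y ∧ x ∈ closedBall xb r₀ := by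
    intro y hy
    have hyV : y ∈ V := hρ₂V (closedBall_subset_closedBall hr₀ρ₂ hy)
    have hyb : y ∈ ball (f xb) (α * r₀) := by
      rw [mem_ball, dist_comm]
      calc dist (f xb) y = dist y (f xb) := dist_comm _ _
        _ ≤ α' * r₀ := hy
        _ < α * r₀ := by nlinarith
    have hxbU : xb ∈ U := hρ₁U (mem_closedBall_self hρ₁.le)
    obtain ⟨x, hx, hfx⟩ := hcov xb hxbU r₀ hr₀ ⟨hyb, hyV⟩
    exact ⟨x, hfx, ball_subset_closedBall hx⟩
  classical
  refine ⟨r₀, hr₀, fun y => if h : y ∈ closedBall (f xb) (α' * r₀)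
      then (hex y h).choose else xb, ?_, ?_⟩
  · intro y hy
    have hch := (hex y hy).choose_spec
    ext x
    simp only [mem_inter_iff, mem_preimage, mem_singleton_iff, dif_pos hy]
    constructor
    · rintro ⟨hfx, hx⟩
      exact huniq x hx _ hch.2 (by rw [hfx, hch.1])
    · rintro rfl
      exact ⟨hch.1, hch.2⟩
  · intro y₁ hy₁ y₂ hy₂
    have h1 := (hex y₁ hy₁).choose_spec
    have h2 := (hex y₂ hy₂).choose_spec
    simp only [dif_pos hy₁, dif_pos hy₂]
    have hb := hinjδ _ (closedBall_subset_closedBall hr₀δ h1.2) _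
      (closedBall_subset_closedBall hr₀δ h2.2)
    rw [h1.1, h2.1] at hb
    rw [inv_mul_eq_div, le_div_iff₀ hβ, mul_comm]
    exact hb

theorem stmt6 (n m : ℕ)
    (f : EuclideanSpace ℝ (Fin n) → EuclideanSpace ℝ (Fin m))
    (xb : EuclideanSpace ℝ (Fin n))
    (hc : ContinuousAt f xb)
    (hlo : ∃ α > (0:ℝ), LinOpenWith f xb α)
    (hmi : MetricallyInjectiveAround f xb) :
    StronglyRegularAround f xb ∧
    ∀ α : ℝ≥0, 0 < α → (α : ℝ≥0∞) < lopBound f xb →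
    ∀ β : ℝ≥0, 0 < β → (β : ℝ≥0∞) < injBound f xb →
    ∃ r₀ > (0:ℝ), ∃ fs : EuclideanSpace ℝ (Fin m) → EuclideanSpace ℝ (Fin n),
      (∀ y ∈ closedBall (f xb) ((α : ℝ) * r₀),
        f ⁻¹' {y} ∩ closedBall xb r₀ = {fs y}) ∧
      ∀ y₁ ∈ closedBall (f xb) ((α : ℝ) * r₀),
        ∀ y₂ ∈ closedBall (f xb) ((α : ℝ) * r₀),
          ‖fs y₁ - fs y₂‖ ≤ ((β : ℝ))⁻¹ * ‖y₁ - y₂‖ := by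
  obtain ⟨β₀, hβ₀, hβ₀inj⟩ := hmi
  obtain ⟨α₀, hα₀, hα₀lo⟩ := hlo
  constructor
  · refine ⟨⟨α₀, hα₀, hα₀lo⟩, ?_⟩
    obtain ⟨r₀, hr₀, fs, hfs, _⟩ := key_lemma f xb α₀ β₀ (α₀/2) hβ₀ hα₀lo hβ₀inj
      (by linarith) (by linarith)
    refine ⟨closedBall (f xb) (α₀/2 * r₀),
      Metric.closedBall_mem_nhds _ (by positivity),
      closedBall xb r₀, Metric.closedBall_mem_nhds _ hr₀, fun y hy => ⟨fs y, hfs y hy⟩⟩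
  · intro α hα hαlop β hβ hβinj
    rw [lopBound, lt_iSup_iff] at hαlop
    obtain ⟨α₁, hα₁⟩ := hαlop
    rw [lt_iSup_iff] at hα₁
    obtain ⟨⟨hα₁pos, hα₁lo⟩, hαlt⟩ := hα₁
    rw [ENNReal.coe_lt_coe] at hαlt
    rw [injBound, lt_iSup_iff] at hβinj
    obtain ⟨β₁, hβ₁⟩ := hβinj
    rw [lt_iSup_iff] at hβ₁
    obtain ⟨⟨hβ₁pos, hβ₁inj⟩, hβlt⟩ := hβ₁
    rw [ENNReal.coe_lt_coe] at hβlt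
    have hβinj' : IsInjConstAround f xb (β : ℝ) := by
      obtain ⟨δ, hδ, h⟩ := hβ₁inj
      refine ⟨δ, hδ, fun x₁ hx₁ x₂ hx₂ => le_trans ?_ (h x₁ hx₁ x₂ hx₂)⟩
      have : (β : ℝ) ≤ (β₁ : ℝ) := by exact_mod_cast hβlt.le
      nlinarith [norm_nonneg (x₁ - x₂)]
    exact key_lemma f xb (α₁ : ℝ) (β : ℝ) (α : ℝ) (by exact_mod_cast hβ) hα₁lo hβinj'
      (by exact_mod_cast hα) (by exact_mod_cast hαlt)
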